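/- Let g₁, g₂, g₃ ∈ SL(2,ℝ) be positive elements such that g₁g₂, g₂g₃ and g₁g₂g₃ are also positive. Set v₀ := (1,0) ∈ ℝ², v₁ := g₁v₀, v₂ := g₁g₂v₀, v₃ := g₁g₂g₃v₀. Then det(vᵢ,vⱼ) > 0 for all 0 ≤ i < j ≤ 3, and the cross-ratio z := (det(v₀,v₃)·det(v₁,v₂))/(det(v₀,v₂)·det(v₁,v₃)) satisfies 0 < z < 1. -/

import Mathlib

/-- `det(u,w) = u₁w₂ − u₂w₁` for `u, w ∈ ℝ²`. -/
noncomputable def ddR (u w : Fin 2 → ℝ) : ℝ := u 0 * w 1 - u 1 * w 0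

theorem stmt16 (g₁ g₂ g₃ : Matrix (Fin 2) (Fin 2) ℝ)
    (hd₁ : g₁.det = 1) (hd₂ : g₂.det = 1) (hd₃ : g₃.det = 1)
    (hp₁ : 0 < g₁ 1 0) (hp₂ : 0 < g₂ 1 0) (hp₃ : 0 < g₃ 1 0)
    (hp₁₂ : 0 < (g₁ * g₂) 1 0) (hp₂₃ : 0 < (g₂ * g₃) 1 0)
    (hp₁₂₃ : 0 < (g₁ * g₂ * g₃) 1 0) :
    let v₀ : Fin 2 → ℝ := ![1, 0]
    let v₁ := g₁.mulVec v₀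
    let v₂ := (g₁ * g₂).mulVec v₀
    let v₃ := (g₁ * g₂ * g₃).mulVec v₀
    (0 < ddR v₀ v₁ ∧ 0 < ddR v₀ v₂ ∧ 0 < ddR v₀ v₃ ∧
      0 < ddR v₁ v₂ ∧ 0 < ddR v₁ v₃ ∧ 0 < ddR v₂ v₃) ∧
    0 < (ddR v₀ v₃ * ddR v₁ v₂) / (ddR v₀ v₂ * ddR v₁ v₃) ∧
    (ddR v₀ v₃ * ddR v₁ v₂) / (ddR v₀ v₂ * ddR v₁ v₃) < 1 := by
  intro v₀ v₁ v₂ v₃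
  have hd₁₂ : (g₁ * g₂).det = 1 := by rw [Matrix.det_mul, hd₁, hd₂]; norm_num
  simp only [Matrix.det_fin_two, Matrix.mul_apply, Fin.sum_univ_two] at hd₁ hd₂ hd₃ hd₁₂
  simp only [Matrix.mul_apply, Fin.sum_univ_two] at hp₁₂ hp₂₃ hp₁₂₃
  simp only [ddR, v₀, v₁, v₂, v₃, Matrix.mulVec, dotProduct, Fin.sum_univ_two,
    Matrix.mul_apply, Matrix.cons_val_zero, Matrix.cons_val_one, Matrix.head_cons,
    mul_one, mul_zero, add_zero]
  simp only [one_mul, zero_mul, sub_zero]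
  have h12 : (0:ℝ) < g₁ 0 0 * (g₁ 1 0 * g₂ 0 0 + g₁ 1 1 * g₂ 1 0) -
      g₁ 1 0 * (g₁ 0 0 * g₂ 0 0 + g₁ 0 1 * g₂ 1 0) := by nlinarith [hp₂, hd₁]
  have h13 : (0:ℝ) < g₁ 0 0 * ((g₁ 1 0 * g₂ 0 0 + g₁ 1 1 * g₂ 1 0) * g₃ 0 0 +
        (g₁ 1 0 * g₂ 0 1 + g₁ 1 1 * g₂ 1 1) * g₃ 1 0) -
      g₁ 1 0 * ((g₁ 0 0 * g₂ 0 0 + g₁ 0 1 * g₂ 1 0) * g₃ 0 0 +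
        (g₁ 0 0 * g₂ 0 1 + g₁ 0 1 * g₂ 1 1) * g₃ 1 0) := by nlinarith [hp₂₃, hd₁]
  have h23 : (0:ℝ) < (g₁ 0 0 * g₂ 0 0 + g₁ 0 1 * g₂ 1 0) *
        ((g₁ 1 0 * g₂ 0 0 + g₁ 1 1 * g₂ 1 0) * g₃ 0 0 +
          (g₁ 1 0 * g₂ 0 1 + g₁ 1 1 * g₂ 1 1) * g₃ 1 0) -
      (g₁ 1 0 * g₂ 0 0 + g₁ 1 1 * g₂ 1 0) *
        ((g₁ 0 0 * g₂ 0 0 + g₁ 0 1 * g₂ 1 0) * g₃ 0 0 +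
          (g₁ 0 0 * g₂ 0 1 + g₁ 0 1 * g₂ 1 1) * g₃ 1 0) := by nlinarith [hp₃, hd₁₂]
  refine ⟨⟨hp₁, hp₁₂, hp₁₂₃, by ring_nf; ring_nf at h12 ⊢; linarith [h12],
    by ring_nf; ring_nf at h13 ⊢; linarith [h13], by ring_nf; ring_nf at h23 ⊢; linarith [h23]⟩,
    ?_, ?_⟩
  · exact div_pos (mul_pos hp₁₂₃ h12) (mul_pos hp₁₂ h13)
  · rw [div_lt_one (mul_pos hp₁₂ h13)]
    nlinarith [mul_pos hp₁ hp₃, hd₂, mul_pos hp₁₂₃ hp₂, mul_pos hp₁₂ hp₂₃]
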